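/- arXiv:2511.09033 — 2 statements merged into one kernel-verified Lean document; each statement's English description precedes it below -/
import Mathlib

section
/- For characters θ₁, θ₂ : 𝔢¹ → ℂ^×, one has (1/|H|)·Σ_{g ∈ H} χ_{θ₁}(g)·conj(χ_{θ₂}(g)) = 1 if θ₁ = θ₂, and = 0 if θ₁ ≠ θ₂. -/
open Matrix

noncomputable section

open Classical in
/-- The function `χ_θ` on the lower-triangular subgroup `H` of `U(1,1)(𝔽_q)` (the
restriction to `H` of the character of the cuspidal representation with central character
`θ`): on `[[a,0],[c,ā⁻¹]]` it equals `(q−1)·θ(a)` if `a ∈ 𝔢¹` and `c = 0`, `−θ(a)` if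
`a ∈ 𝔢¹` and `c ≠ 0`, and `0` if `a ∉ 𝔢¹`.  Here `x̄ = x^q` and `𝔢¹ = {x : x·x^q = 1}`. -/
noncomputable def chiRes (q : ℕ) {e : Type*} [Field e] (θ : e → ℂ)
    (g : Matrix (Fin 2) (Fin 2) e) : ℂ :=
  if g 0 0 * (g 0 0) ^ q = 1 then
    (if g 1 0 = 0 then ((q : ℂ) - 1) * θ (g 0 0) else - θ (g 0 0))
  else 0


open Polynomial in
lemma count_pow_eq_one {e : Type*} [Field e] [Fintype e] [DecidableEq e] {d : ℕ} (hd : 0 < d)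
    (hdvd : d ∣ Fintype.card e - 1) :
    (Finset.univ.filter fun x : e => x ^ d = 1).card = d := by
  obtain ⟨g, hg⟩ := IsCyclic.exists_ofOrder_eq_natCard (α := eˣ)
  have hcard : orderOf g = Fintype.card e - 1 := by
    rw [hg, Nat.card_eq_fintype_card, Fintype.card_units]
  have hg0 : orderOf g ≠ 0 := by
    rw [hcard]
    have : 1 < Fintype.card e := Fintype.one_lt_card
    omega
  have hdvd' : d ∣ orderOf g := hcard ▸ hdvd
  have hζ : orderOf (g ^ (orderOf g / d)) = d := orderOf_pow_orderOf_div hg0 hdvd'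
  have hprim : IsPrimitiveRoot ((g ^ (orderOf g / d) : eˣ) : e) d := by
    have h1 := IsPrimitiveRoot.orderOf (g ^ (orderOf g / d))
    rw [hζ] at h1
    exact IsPrimitiveRoot.coe_units_iff.mpr h1
  have hset : (Finset.univ.filter fun x : e => x ^ d = 1) = nthRootsFinset d (1 : e) := by
    ext x
    simp [Polynomial.mem_nthRootsFinset hd]
  rw [hset, hprim.card_nthRootsFinset]

section Counts
variable {q p n : ℕ} {e : Type*} [Field e] [Fintype e] [DecidableEq e]

lemma q_ge_three (hq_odd : Odd q) (hp : p.Prime) (hn : 0 < n) (hqpn : q = p ^ n) : 3 ≤ q := by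
  have hp2 : p ≠ 2 := by
    rintro rfl
    have : 2 ∣ q := hqpn ▸ dvd_pow_self 2 hn.ne'
    exact (Nat.not_even_iff_odd.mpr hq_odd) (even_iff_two_dvd.mpr this)
  have hp3 : 3 ≤ p := by
    have := hp.two_le
    omega
  calc (3:ℕ) ≤ p := hp3
    _ = p ^ 1 := (pow_one p).symm
    _ ≤ p ^ n := Nat.pow_le_pow_right (by omega) hn
    _ = q := hqpn.symm

lemma cardU (hq_odd : Odd q) (hp : p.Prime) (hn : 0 < n) (hqpn : q = p ^ n)
    (hcard : Fintype.card e = q ^ 2) :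
    (Finset.univ.filter fun a : e => a * a ^ q = 1).card = q + 1 := by
  have hq3 := q_ge_three hq_odd hp hn hqpn
  have key : q ^ 2 - 1 = (q + 1) * (q - 1) := by
    have h1 : q ^ 2 = (q + 1) * (q - 1) + 1 := by
      rcases Nat.exists_eq_add_of_le (by omega : 1 ≤ q) with ⟨k, rfl⟩
      simp only [Nat.add_sub_cancel_left]
      ring
    omega
  have hdvd : q + 1 ∣ Fintype.card e - 1 := by
    rw [hcard, key]; exact Dvd.intro _ rfl
  have := count_pow_eq_one (e := e) (d := q + 1) (by omega) hdvd
  rw [← this]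
  congr 1
  ext a
  simp only [Finset.mem_filter, Finset.mem_univ, true_and, pow_succ]
  constructor
  · intro h; rw [← h]; ring
  · intro h; rw [← h]; ring

end Counts


section Counts2
variable {q p n : ℕ} {e : Type*} [Field e] [Fintype e] [DecidableEq e]

lemma cardK (hq_odd : Odd q) (hp : p.Prime) (hn : 0 < n) (hqpn : q = p ^ n)
    (hcard : Fintype.card e = q ^ 2) (hq3 : 3 ≤ q) :
    (Finset.univ.filter fun t : e => t + t ^ q = 0).card = q := by
  -- characteristic
  have hp2 : p ≠ 2 := by
    rintro rfl
    have : 2 ∣ q := hqpn ▸ dvd_pow_self 2 hn.ne'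
    exact (Nat.not_even_iff_odd.mpr hq_odd) (even_iff_two_dvd.mpr this)
  have hchar : ringChar e = p := by
    obtain ⟨m, hrp, hcm⟩ := FiniteField.card e (ringChar e)
    have hdvd : ringChar e ∣ p ^ (n * 2) := by
      have h2 : ringChar e ^ (m : ℕ) = p ^ (n * 2) := by
        rw [← hcm, hcard, hqpn, ← pow_mul]
      rw [← h2]
      exact dvd_pow_self _ (by positivity)
    have := hrp.dvd_of_dvd_pow hdvd
    exact (Nat.prime_dvd_prime_iff_eq hrp hp).mp this
  haveI hCp : CharP e p := hchar ▸ ringChar.charP e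
  have hne11 : (-1 : e) ≠ 1 := by
    haveI : Fact (2 < p) := ⟨by have := hp.two_le; omega⟩
    exact CharP.neg_one_ne_one e p
  have key : q ^ 2 - 1 = (q + 1) * (q - 1) := by
    have h1 : q ^ 2 = (q + 1) * (q - 1) + 1 := by
      rcases Nat.exists_eq_add_of_le (by omega : 1 ≤ q) with ⟨k, rfl⟩
      simp only [Nat.add_sub_cancel_left]
      ring
    omega
  obtain ⟨s, hs⟩ : ∃ s, q + 1 = 2 * s := by
    obtain ⟨t, ht⟩ := hq_odd
    exact ⟨t + 1, by omega⟩
  have cN1 : (Finset.univ.filter fun x : e => x ^ (q - 1) = 1).card = q - 1 :=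
    count_pow_eq_one (by omega) (by rw [hcard, key]; exact ⟨q + 1, by ring⟩)
  have cN2 : (Finset.univ.filter fun x : e => x ^ (2 * (q - 1)) = 1).card = 2 * (q - 1) :=
    count_pow_eq_one (by omega)
      (by rw [hcard, key]; exact ⟨s, by rw [hs]; ring⟩)
  have hsplit : (Finset.univ.filter fun x : e => x ^ (2 * (q - 1)) = 1) =
      (Finset.univ.filter fun x : e => x ^ (q - 1) = 1) ∪
      (Finset.univ.filter fun x : e => x ^ (q - 1) = -1) := by
    ext x
    simp only [Finset.mem_filter, Finset.mem_univ, true_and, Finset.mem_union]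
    rw [mul_comm 2 (q - 1), pow_mul, sq_eq_one_iff]
  have hdisj : Disjoint (Finset.univ.filter fun x : e => x ^ (q - 1) = 1)
      (Finset.univ.filter fun x : e => x ^ (q - 1) = -1) := by
    rw [Finset.disjoint_filter]
    intro x _ h1 h2
    rw [h1] at h2
    exact hne11 h2.symm
  have cNeg : (Finset.univ.filter fun x : e => x ^ (q - 1) = -1).card = q - 1 := by
    have := Finset.card_union_of_disjoint hdisj
    rw [← hsplit, cN2, cN1] at this
    omega
  have hKins : (Finset.univ.filter fun t : e => t + t ^ q = 0) =
      insert (0 : e) (Finset.univ.filter fun x : e => x ^ (q - 1) = -1) := by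
    ext x
    simp only [Finset.mem_filter, Finset.mem_univ, true_and, Finset.mem_insert]
    constructor
    · intro h
      by_cases hx : x = 0
      · exact Or.inl hx
      · right
        have hq' : q - 1 + 1 = q := by omega
        have hxq : x ^ q = x ^ (q - 1) * x := by rw [← pow_succ, hq']
        rw [hxq] at h
        have : (1 + x ^ (q - 1)) * x = 0 := by ring_nf; linear_combination h
        rcases mul_eq_zero.mp this with h' | h'
        · linear_combination h'
        · exact absurd h' hx
    · rintro (rfl | h)
      · simp [zero_pow (by omega : q ≠ 0)]
      · have hq' : q - 1 + 1 = q := by omega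
        have hxq : x ^ q = x ^ (q - 1) * x := by rw [← pow_succ, hq']
        rw [hxq, h]; ring
  have h0 : (0 : e) ∉ (Finset.univ.filter fun x : e => x ^ (q - 1) = -1) := by
    simp only [Finset.mem_filter, Finset.mem_univ, true_and]
    rw [zero_pow (by omega : q - 1 ≠ 0)]
    intro h
    exact one_ne_zero (α := e) (by linear_combination h)
  rw [hKins, Finset.card_insert_of_notMem h0, cNeg]
  omega

end Counts2


section Theta
variable {q : ℕ} {e : Type*} [Field e]

lemma memU_mul {a b : e} (ha : a * a ^ q = 1) (hb : b * b ^ q = 1) :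
    (a * b) * (a * b) ^ q = 1 := by
  rw [mul_pow]
  calc a * b * (a ^ q * b ^ q) = (a * a ^ q) * (b * b ^ q) := by ring
    _ = 1 := by rw [ha, hb, one_mul]

lemma memU_pow {a : e} (ha : a * a ^ q = 1) (k : ℕ) : a ^ k * (a ^ k) ^ q = 1 := by
  rw [← pow_mul, mul_comm k q, pow_mul, ← mul_pow, ha, one_pow]

lemma theta_pow (θ : e → ℂ) (hone : θ 1 = 1)
    (hmul : ∀ x y : e, x * x ^ q = 1 → y * y ^ q = 1 → θ (x * y) = θ x * θ y)
    {a : e} (ha : a * a ^ q = 1) (k : ℕ) : θ (a ^ k) = θ a ^ k := by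
  induction k with
  | zero => simpa using hone
  | succ k ih =>
    rw [pow_succ, hmul _ _ (memU_pow ha k) ha, ih, pow_succ]

lemma theta_conj (hq : q ≠ 0) (θ : e → ℂ) (hone : θ 1 = 1)
    (hmul : ∀ x y : e, x * x ^ q = 1 → y * y ^ q = 1 → θ (x * y) = θ x * θ y)
    {a : e} (ha : a * a ^ q = 1) : θ a * (starRingEnd ℂ) (θ a) = 1 := by
  have haq1 : a ^ (q + 1) = 1 := by rw [pow_succ, mul_comm, ha]
  have hpow : θ a ^ (q + 1) = 1 := by
    rw [← theta_pow θ hone hmul ha, haq1, hone]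
  have hnorm : ‖θ a‖ = 1 := Complex.norm_eq_one_of_pow_eq_one hpow (by omega)
  rw [Complex.mul_conj, Complex.normSq_eq_norm_sq, hnorm]
  norm_num

variable [Fintype e] [DecidableEq e]

lemma sum_theta_one (hq : q ≠ 0) (θ₁ θ₂ : e → ℂ)
    (hθ₂_one : θ₂ 1 = 1)
    (hθ₂_mul : ∀ x y : e, x * x ^ q = 1 → y * y ^ q = 1 → θ₂ (x * y) = θ₂ x * θ₂ y)
    (heq : ∀ x : e, x * x ^ q = 1 → θ₁ x = θ₂ x) :
    ∑ a ∈ Finset.univ.filter (fun a : e => a * a ^ q = 1),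
      θ₁ a * (starRingEnd ℂ) (θ₂ a) =
    ((Finset.univ.filter fun a : e => a * a ^ q = 1).card : ℂ) := by
  rw [Finset.card_eq_sum_ones, Nat.cast_sum]
  apply Finset.sum_congr rfl
  intro a ha
  rw [Finset.mem_filter] at ha
  rw [heq a ha.2, theta_conj hq θ₂ hθ₂_one hθ₂_mul ha.2]
  norm_num

lemma sum_theta_zero (hq : q ≠ 0) (θ₁ θ₂ : e → ℂ)
    (hθ₁_one : θ₁ 1 = 1)
    (hθ₁_mul : ∀ x y : e, x * x ^ q = 1 → y * y ^ q = 1 → θ₁ (x * y) = θ₁ x * θ₁ y)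
    (hθ₂_one : θ₂ 1 = 1)
    (hθ₂_mul : ∀ x y : e, x * x ^ q = 1 → y * y ^ q = 1 → θ₂ (x * y) = θ₂ x * θ₂ y)
    {b : e} (hb : b * b ^ q = 1) (hne : θ₁ b ≠ θ₂ b) :
    ∑ a ∈ Finset.univ.filter (fun a : e => a * a ^ q = 1),
      θ₁ a * (starRingEnd ℂ) (θ₂ a) = 0 := by
  set U := Finset.univ.filter (fun a : e => a * a ^ q = 1) with hU
  set T := ∑ a ∈ U, θ₁ a * (starRingEnd ℂ) (θ₂ a) with hT
  have hcb : θ₁ b * (starRingEnd ℂ) (θ₂ b) ≠ 1 := by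
    intro h
    have h2 := theta_conj hq θ₂ hθ₂_one hθ₂_mul hb
    have hX : (starRingEnd ℂ) (θ₂ b) ≠ 0 := by
      intro h0; rw [h0, mul_zero] at h2; exact zero_ne_one h2
    exact hne (mul_right_cancel₀ hX (h.trans h2.symm))
  have hreindex : T = ∑ a ∈ U, θ₁ (b * a) * (starRingEnd ℂ) (θ₂ (b * a)) := by
    rw [hT]
    apply Finset.sum_nbij' (fun a => b ^ q * a) (fun a => b * a)
    · intro a ha
      rw [hU, Finset.mem_filter] at ha ⊢
      exact ⟨Finset.mem_univ _, memU_mul (memU_pow hb q) ha.2⟩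
    · intro a ha
      rw [hU, Finset.mem_filter] at ha ⊢
      exact ⟨Finset.mem_univ _, memU_mul hb ha.2⟩
    · intro a _
      rw [← mul_assoc, hb, one_mul]
    · intro a _
      rw [← mul_assoc, mul_comm (b ^ q) b, hb, one_mul]
    · intro a ha
      rw [hU, Finset.mem_filter] at ha
      rw [← mul_assoc, hb, one_mul]
  have hsplit : T = (θ₁ b * (starRingEnd ℂ) (θ₂ b)) * T := by
    conv_lhs => rw [hreindex]
    rw [Finset.mul_sum]
    apply Finset.sum_congr rfl
    intro a ha
    rw [hU, Finset.mem_filter] at ha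
    rw [hθ₁_mul b a hb ha.2, hθ₂_mul b a hb ha.2, _root_.map_mul]
    ring
  have : (1 - θ₁ b * (starRingEnd ℂ) (θ₂ b)) * T = 0 := by
    rw [sub_mul, one_mul, ← hsplit, sub_self]
  rcases mul_eq_zero.mp this with h | h
  · exfalso; apply hcb; linear_combination -h
  · exact h
end Theta


lemma mem_H_iff {q : ℕ} (hq : q ≠ 0) {e : Type*} [Field e]
    (hq2 : ∀ x : e, (x ^ q) ^ q = x) (g : Matrix (Fin 2) (Fin 2) e) :
    ((Matrix.of fun i j => (g i j) ^ q)ᵀ * !![0, 1; 1, 0] * g = !![0, 1; 1, 0] ∧ g 0 1 = 0)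
    ↔ (g 0 0 ≠ 0 ∧ g 0 1 = 0 ∧ g 1 1 = (g 0 0 ^ q)⁻¹ ∧
        g 0 0 ^ q * g 1 0 + (g 0 0 ^ q * g 1 0) ^ q = 0) := by
  have hkey : ∀ x y : e, (x ^ q * y) ^ q = x * y ^ q := by
    intro x y; rw [mul_pow, hq2]
  constructor
  · rintro ⟨hM, h01⟩
    have hent := fun i j => congrFun (congrFun hM i) j
    have e00 := hent 0 0
    have e01 := hent 0 1
    simp [Matrix.mul_apply, Fin.sum_univ_two] at e00 e01
    rw [h01, mul_zero, zero_add] at e01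
    have ha : g 0 0 ≠ 0 := by
      intro h0
      rw [h0, zero_pow hq, zero_mul] at e01
      exact zero_ne_one e01
    have haq : g 0 0 ^ q ≠ 0 := pow_ne_zero _ ha
    refine ⟨ha, h01, ?_, ?_⟩
    · field_simp
      linear_combination e01
    · rw [hkey]
      linear_combination e00
  · rintro ⟨ha, h01, h11, ht⟩
    have haq : g 0 0 ^ q ≠ 0 := pow_ne_zero _ ha
    rw [hkey] at ht
    refine ⟨?_, h01⟩
    ext i j
    fin_cases i <;> fin_cases j <;>
      simp [Matrix.mul_apply, Fin.sum_univ_two, h01, h11, zero_pow hq]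
    · linear_combination ht
    · exact mul_inv_cancel₀ haq
    · rw [hq2]
      exact inv_mul_cancel₀ ha


section Main

lemma master {q p n : ℕ} {e : Type*} [Field e] [Fintype e] [DecidableEq e]
    (hq_odd : Odd q) (hp : p.Prime) (hn : 0 < n) (hqpn : q = p ^ n)
    (hcard : Fintype.card e = q ^ 2)
    (θ₁ θ₂ : e → ℂ)
    (hθ₁_one : θ₁ 1 = 1)
    (hθ₁_mul : ∀ x y : e, x * x ^ q = 1 → y * y ^ q = 1 → θ₁ (x * y) = θ₁ x * θ₁ y)
    (hθ₂_one : θ₂ 1 = 1)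
    (hθ₂_mul : ∀ x y : e, x * x ^ q = 1 → y * y ^ q = 1 → θ₂ (x * y) = θ₂ x * θ₂ y) :
    let H : Set (Matrix (Fin 2) (Fin 2) e) :=
      {g | (Matrix.of fun i j => (g i j) ^ q)ᵀ * !![0, 1; 1, 0] * g = !![0, 1; 1, 0] ∧
        g 0 1 = 0}
    ((∀ x : e, x * x ^ q = 1 → θ₁ x = θ₂ x) →
      (1 / (Nat.card H : ℂ)) *
        ∑ᶠ g ∈ H, chiRes q θ₁ g * (starRingEnd ℂ) (chiRes q θ₂ g) = 1) ∧
    ((∃ x : e, x * x ^ q = 1 ∧ θ₁ x ≠ θ₂ x) →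
      (1 / (Nat.card H : ℂ)) *
        ∑ᶠ g ∈ H, chiRes q θ₁ g * (starRingEnd ℂ) (chiRes q θ₂ g) = 0) := by
  intro H
  have hq3 : 3 ≤ q := q_ge_three hq_odd hp hn hqpn
  have hq0 : q ≠ 0 := by omega
  have hq2 : ∀ x : e, (x ^ q) ^ q = x := by
    intro x
    rw [← pow_mul, ← sq, ← hcard]
    exact FiniteField.pow_card x
  have cU : (Finset.univ.filter fun a : e => a * a ^ q = 1).card = q + 1 :=
    cardU hq_odd hp hn hqpn hcard
  have cK : (Finset.univ.filter fun t : e => t + t ^ q = 0).card = q :=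
    cardK hq_odd hp hn hqpn hcard hq3
  set Hfin : Finset (Matrix (Fin 2) (Fin 2) e) :=
    Finset.univ.filter (fun g => g ∈ H) with hHfin
  have hHset : H = ↑Hfin := by
    ext g
    simp [hHfin]
  have hmem : ∀ g : Matrix (Fin 2) (Fin 2) e, g ∈ Hfin ↔
      (g 0 0 ≠ 0 ∧ g 0 1 = 0 ∧ g 1 1 = (g 0 0 ^ q)⁻¹ ∧
        g 0 0 ^ q * g 1 0 + (g 0 0 ^ q * g 1 0) ^ q = 0) := by
    intro g
    rw [hHfin, Finset.mem_filter]
    simp only [Finset.mem_univ, true_and]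
    exact mem_H_iff hq0 hq2 g
  set A : Finset e := Finset.univ.filter (fun a : e => a ≠ 0) with hA
  set S : Finset (e × e) :=
    A ×ˢ (Finset.univ.filter fun t : e => t + t ^ q = 0) with hS
  set ι : e × e → Matrix (Fin 2) (Fin 2) e :=
    fun p' => !![p'.1, 0; p'.2 * (p'.1 ^ q)⁻¹, (p'.1 ^ q)⁻¹] with hι
  have hι00 : ∀ p' : e × e, ι p' 0 0 = p'.1 := by intro p'; simp [hι]
  have hι01 : ∀ p' : e × e, ι p' 0 1 = 0 := by intro p'; simp [hι]
  have hι10 : ∀ p' : e × e, ι p' 1 0 = p'.2 * (p'.1 ^ q)⁻¹ := by intro p'; simp [hι]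
  have hι11 : ∀ p' : e × e, ι p' 1 1 = (p'.1 ^ q)⁻¹ := by intro p'; simp [hι]
  have hmemS : ∀ p' : e × e, p' ∈ S ↔ (p'.1 ≠ 0 ∧ p'.2 + p'.2 ^ q = 0) := by
    intro p'
    rw [hS, Finset.mem_product, hA]
    simp only [Finset.mem_filter, Finset.mem_univ, true_and]
  have hιmem : ∀ p' ∈ S, ι p' ∈ Hfin := by
    intro p' hp'
    rw [hmemS] at hp'
    obtain ⟨ha, htK⟩ := hp'
    have haq : p'.1 ^ q ≠ 0 := pow_ne_zero _ ha
    rw [hmem, hι00, hι01, hι10, hι11]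
    refine ⟨ha, rfl, rfl, ?_⟩
    have hsimp : p'.1 ^ q * (p'.2 * (p'.1 ^ q)⁻¹) = p'.2 := by
      field_simp
    rw [hsimp]
    exact htK
  have hσmem : ∀ g ∈ Hfin, (g 0 0, g 0 0 ^ q * g 1 0) ∈ S := by
    intro g hg
    rw [hmem] at hg
    rw [hmemS]
    exact ⟨hg.1, hg.2.2.2⟩
  have hlinv : ∀ g ∈ Hfin, ι (g 0 0, g 0 0 ^ q * g 1 0) = g := by
    intro g hg
    rw [hmem] at hg
    obtain ⟨ha, h01, h11, _⟩ := hg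
    have haq : g 0 0 ^ q ≠ 0 := pow_ne_zero _ ha
    rw [← Matrix.ext_iff]
    simp only [Fin.forall_fin_two]
    refine ⟨⟨?_, ?_⟩, ?_, ?_⟩
    · rw [hι00]
    · rw [hι01, h01]
    · rw [hι10]
      field_simp
    · rw [hι11, h11]
  have hrinv : ∀ p' ∈ S, ((ι p') 0 0, (ι p') 0 0 ^ q * (ι p') 1 0) = p' := by
    intro p' hp'
    rw [hmemS] at hp'
    have haq : p'.1 ^ q ≠ 0 := pow_ne_zero _ hp'.1
    rw [hι00, hι10, Prod.mk.injEq]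
    refine ⟨rfl, ?_⟩
    field_simp
  have hcardH : Hfin.card = (q ^ 2 - 1) * q := by
    have hbij : Hfin.card = S.card :=
      Finset.card_nbij' (fun g => (g 0 0, g 0 0 ^ q * g 1 0)) ι hσmem hιmem hlinv hrinv
    rw [hbij, hS, Finset.card_product, cK, hA, Finset.filter_ne', Finset.card_erase_of_mem
      (Finset.mem_univ 0), Finset.card_univ, hcard]
  have hsum1 : ∑ g ∈ Hfin, chiRes q θ₁ g * (starRingEnd ℂ) (chiRes q θ₂ g)
      = ∑ p' ∈ S, chiRes q θ₁ (ι p') * (starRingEnd ℂ) (chiRes q θ₂ (ι p')) := by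
    apply Finset.sum_nbij' (fun g => (g 0 0, g 0 0 ^ q * g 1 0)) ι hσmem hιmem hlinv hrinv
    intro g hg
    rw [hlinv g hg]
  have hchi : ∀ (θ : e → ℂ) (a t : e), a ≠ 0 →
      chiRes q θ (ι (a, t)) =
        if a * a ^ q = 1 then (if t = 0 then ((q : ℂ) - 1) * θ a else -θ a) else 0 := by
    intro θ a t ha
    have haq : a ^ q ≠ 0 := pow_ne_zero _ ha
    have hcond : (t * (a ^ q)⁻¹ = 0) = (t = 0) := by
      simp [mul_eq_zero, inv_eq_zero, haq]
    simp only [chiRes, hι00, hι10, hcond]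
  have hinner : ∀ a : e, a ≠ 0 →
      (∑ t ∈ Finset.univ.filter (fun t : e => t + t ^ q = 0),
        chiRes q θ₁ (ι (a, t)) * (starRingEnd ℂ) (chiRes q θ₂ (ι (a, t))))
      = if a * a ^ q = 1 then
          ((q : ℂ) ^ 2 - q) * (θ₁ a * (starRingEnd ℂ) (θ₂ a)) else 0 := by
    intro a ha
    by_cases h1 : a * a ^ q = 1
    · rw [if_pos h1]
      have hterm : ∀ t : e,
          chiRes q θ₁ (ι (a, t)) * (starRingEnd ℂ) (chiRes q θ₂ (ι (a, t)))
          = θ₁ a * (starRingEnd ℂ) (θ₂ a) +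
            (if t = 0 then
              ((q:ℂ) - 1) ^ 2 * (θ₁ a * (starRingEnd ℂ) (θ₂ a))
                - θ₁ a * (starRingEnd ℂ) (θ₂ a) else 0) := by
        intro t
        rw [hchi θ₁ a t ha, hchi θ₂ a t ha, if_pos h1, if_pos h1]
        by_cases h2 : t = 0
        · rw [if_pos h2, if_pos h2, if_pos h2, _root_.map_mul]
          have hc : (starRingEnd ℂ) ((q : ℂ) - 1) = (q : ℂ) - 1 := by
            rw [_root_.map_sub, _root_.map_one, Complex.conj_natCast]
          rw [hc]
          ring
        · rw [if_neg h2, if_neg h2, if_neg h2, _root_.map_neg]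
          ring
      rw [Finset.sum_congr rfl (fun t _ => hterm t), Finset.sum_add_distrib,
        Finset.sum_const, cK,
        Finset.sum_ite_eq' _ (0 : e)
          (fun _ => ((q:ℂ) - 1) ^ 2 * (θ₁ a * (starRingEnd ℂ) (θ₂ a))
            - θ₁ a * (starRingEnd ℂ) (θ₂ a))]
      rw [if_pos (by simp [zero_pow hq0] : (0:e) ∈
        Finset.univ.filter (fun t : e => t + t ^ q = 0))]
      rw [nsmul_eq_mul]
      push_cast
      ring
    · rw [if_neg h1]
      apply Finset.sum_eq_zero
      intro t _
      rw [hchi θ₁ a t ha, if_neg h1, hchi θ₂ a t ha, if_neg h1]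
      simp
  have htotal : ∑ p' ∈ S, chiRes q θ₁ (ι p') * (starRingEnd ℂ) (chiRes q θ₂ (ι p'))
      = ((q:ℂ)^2 - q) *
        ∑ a ∈ Finset.univ.filter (fun a : e => a * a ^ q = 1),
          θ₁ a * (starRingEnd ℂ) (θ₂ a) := by
    rw [hS, Finset.sum_product]
    have hstep : ∀ a ∈ A,
        (∑ t ∈ Finset.univ.filter (fun t : e => t + t ^ q = 0),
          chiRes q θ₁ (ι (a, t)) * (starRingEnd ℂ) (chiRes q θ₂ (ι (a, t))))
        = if a * a ^ q = 1 then
            ((q : ℂ) ^ 2 - q) * (θ₁ a * (starRingEnd ℂ) (θ₂ a)) else 0 := by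
      intro a haA
      rw [hA] at haA
      simp only [Finset.mem_filter, Finset.mem_univ, true_and] at haA
      exact hinner a haA
    rw [Finset.sum_congr rfl hstep, ← Finset.sum_filter]
    have hAf : A.filter (fun a => a * a ^ q = 1)
        = Finset.univ.filter (fun a : e => a * a ^ q = 1) := by
      rw [hA, Finset.filter_filter]
      apply Finset.filter_congr
      intro a _
      constructor
      · rintro ⟨_, h⟩; exact h
      · intro h
        refine ⟨?_, h⟩
        intro h0
        rw [h0, zero_pow hq0, mul_zero] at h
        exact zero_ne_one h
    rw [hAf, Finset.mul_sum]
  have hNat : ((Nat.card H : ℕ) : ℂ) = (((q ^ 2 - 1) * q : ℕ) : ℂ) := by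
    rw [hHset, Nat.card_coe_set_eq, Set.ncard_coe_finset, hcardH]
  have hfin : ∑ᶠ g ∈ H, chiRes q θ₁ g * (starRingEnd ℂ) (chiRes q θ₂ g)
      = ((q:ℂ)^2 - q) *
        ∑ a ∈ Finset.univ.filter (fun a : e => a * a ^ q = 1),
          θ₁ a * (starRingEnd ℂ) (θ₂ a) := by
    rw [hHset, finsum_mem_coe_finset, hsum1, htotal]
  have h9 : 9 ≤ q ^ 2 := by nlinarith
  have hden : (((q ^ 2 - 1) * q : ℕ) : ℂ) = ((q:ℂ)^2 - 1) * q := by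
    rw [Nat.cast_mul, Nat.cast_sub (by omega : 1 ≤ q ^ 2), Nat.cast_pow, Nat.cast_one]
  have hq_ne : (q : ℂ) ≠ 0 := Nat.cast_ne_zero.mpr hq0
  have hq2_ne : (q : ℂ)^2 - 1 ≠ 0 := by
    intro h
    have hcast : ((q^2 : ℕ) : ℂ) = ((1 : ℕ) : ℂ) := by push_cast; linear_combination h
    have := Nat.cast_injective (R := ℂ) hcast
    omega
  constructor
  · intro heq
    rw [hfin, hNat, hden,
      sum_theta_one hq0 θ₁ θ₂ hθ₂_one hθ₂_mul heq, cU]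
    push_cast
    field_simp
    ring
  · rintro ⟨b, hb, hneq⟩
    rw [hfin, hNat, hden,
      sum_theta_zero hq0 θ₁ θ₂ hθ₁_one hθ₁_mul hθ₂_one hθ₂_mul hb hneq]
    simp
end Main

/-- Orthogonality: for characters `θ₁, θ₂ : 𝔢¹ → ℂ^×`,
`(1/|H|)·Σ_{g ∈ H} χ_{θ₁}(g)·conj(χ_{θ₂}(g))` equals `1` if `θ₁ = θ₂` and `0` otherwise.
Here `q` is an odd prime power, `𝔢 = 𝔽_{q²}` with involution `x̄ = x^q`,
`H = {g ∈ U(1,1)(𝔽_q) : g lower triangular}`, and the characters `θᵢ` are modelled as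
functions `𝔢 → ℂ` that are multiplicative on `𝔢¹` and send `1` to `1`. -/
theorem statement11 (q : ℕ) (hq_odd : Odd q)
    (p n : ℕ) (hp : p.Prime) (hn : 0 < n) (hqpn : q = p ^ n)
    (e : Type*) [Field e] [Fintype e] (hcard : Fintype.card e = q ^ 2)
    (θ₁ θ₂ : e → ℂ)
    (hθ₁_one : θ₁ 1 = 1)
    (hθ₁_mul : ∀ x y : e, x * x ^ q = 1 → y * y ^ q = 1 → θ₁ (x * y) = θ₁ x * θ₁ y)
    (hθ₂_one : θ₂ 1 = 1)
    (hθ₂_mul : ∀ x y : e, x * x ^ q = 1 → y * y ^ q = 1 → θ₂ (x * y) = θ₂ x * θ₂ y) :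
    -- `H` is the lower-triangular subgroup of `U(1,1)(𝔽_q)`
    let H : Set (Matrix (Fin 2) (Fin 2) e) :=
      {g | (Matrix.of fun i j => (g i j) ^ q)ᵀ * !![0, 1; 1, 0] * g = !![0, 1; 1, 0] ∧
        g 0 1 = 0}
    -- if `θ₁ = θ₂` on `𝔢¹`, the normalized sum is `1` ...
    ((∀ x : e, x * x ^ q = 1 → θ₁ x = θ₂ x) →
      (1 / (Nat.card H : ℂ)) *
        ∑ᶠ g ∈ H, chiRes q θ₁ g * (starRingEnd ℂ) (chiRes q θ₂ g) = 1) ∧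
    -- ... and if `θ₁ ≠ θ₂` on `𝔢¹`, it is `0`
    ((∃ x : e, x * x ^ q = 1 ∧ θ₁ x ≠ θ₂ x) →
      (1 / (Nat.card H : ℂ)) *
        ∑ᶠ g ∈ H, chiRes q θ₁ g * (starRingEnd ℂ) (chiRes q θ₂ g) = 0) := by
  classical
  exact master hq_odd hp hn hqpn hcard θ₁ θ₂ hθ₁_one hθ₁_mul hθ₂_one hθ₂_mul
end
end

section
/- Let d > 0 be an integer, let V be a nonzero complex vector space, and let σ : K → GL(V) be a group homomorphism with K₁ ⊆ ker σ. Define σ^{η^d} on the subgroup B·K_d = K ∩ η^dKη^{−d} by σ^{η^d}(a) := σ(η^{−d}·a·η^{d}) (well defined, since η^{−d}(B·K_d)η^{d} ⊆ K). Then: (i) K_{d+1} ⊆ ker(σ^{η^d}); and (ii) if there exists c ∈ √ε·O_F^× with σ([[1,0],[c,1]]) ≠ id, then K_d ⊄ ker(σ^{η^d}). -/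
open Matrix
open scoped Pointwise

noncomputable section

/-- Ambient data for the paper: `E` is the unramified quadratic extension `F(√ε)` of a
nonarchimedean local field `F` of odd residual characteristic.  The field `F` is realized
as the fixed field of the nontrivial `F`-automorphism `σ` of `E`; `ν` is the discrete
valuation of `E` (extending the valuation of `F` normalized by `ν ϖ = 1` at a uniformizer
`ϖ` of `F`, and still surjecting onto `ℤ` since `E/F` is unramified); `q` is the (odd)
cardinality of the residue field of `F` (so `q²` is that of `E`); `ε ∈ O_F^×` is a
non-square unit and `sqε = √ε` generates `E` over `F`.  The standard facts about the
norm map and squares are included as fields. -/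
structure Setting (E : Type*) [Field E] where
  /-- the nontrivial `F`-automorphism of `E`, written `x̄ = σ x` -/
  σ : E →+* E
  σσ : ∀ x, σ (σ x) = x
  σ_ne_id : σ ≠ RingHom.id E
  /-- the valuation (only its values at nonzero elements matter) -/
  ν : E → ℤ
  ν_mul : ∀ {x y : E}, x ≠ 0 → y ≠ 0 → ν (x * y) = ν x + ν y
  ν_add : ∀ {x y : E}, x ≠ 0 → y ≠ 0 → x + y ≠ 0 → min (ν x) (ν y) ≤ ν (x + y)
  ν_σ : ∀ x, ν (σ x) = ν x
  ν_surj : ∀ n : ℤ, ∃ x : E, x ≠ 0 ∧ ν x = n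
  /-- a uniformizer of `F` -/
  ϖ : E
  ϖ_ne_zero : ϖ ≠ 0
  ϖ_fixed : σ ϖ = ϖ
  ν_ϖ : ν ϖ = 1
  /-- the residual cardinality of `F` -/
  q : ℕ
  q_odd : Odd q
  one_lt_q : 1 < q
  /-- a non-square unit of `O_F` -/
  ε : E
  ε_fixed : σ ε = ε
  ε_ne_zero : ε ≠ 0
  ν_ε : ν ε = 0
  ε_nonsquare : ¬ ∃ f : E, σ f = f ∧ f * f = ε
  /-- a square root `√ε ∈ E` of `ε` -/
  sqε : E
  sqε_sq : sqε * sqε = ε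
  sqε_conj : σ sqε = -sqε
  /-- `E = F(√ε)` -/
  generates : ∀ x : E, ∃ a b : E, σ a = a ∧ σ b = b ∧ x = a + b * sqε
  /-- the norm maps `O_E^×` onto `O_F^×` -/
  norm_surj_units : ∀ y : E, σ y = y → y ≠ 0 → ν y = 0 →
    ∃ x : E, x ≠ 0 ∧ ν x = 0 ∧ x * σ x = y
  /-- the norm maps `1 + p_E^d` onto `1 + p_F^d` for every `d ≥ 1` -/
  norm_surj_one_add : ∀ d : ℤ, 1 ≤ d → ∀ y : E, σ y = y → (y - 1 = 0 ∨ d ≤ ν (y - 1)) →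
    ∃ x : E, (x - 1 = 0 ∨ d ≤ ν (x - 1)) ∧ x * σ x = y
  /-- the residue field of `F` has `q` elements -/
  residue_F : ∃ R : Finset E, R.card = q ∧ (∀ r ∈ R, σ r = r ∧ (r = 0 ∨ 0 ≤ ν r)) ∧
    ∀ x : E, σ x = x → (x = 0 ∨ 0 ≤ ν x) →
      ∃! r, r ∈ R ∧ (x - r = 0 ∨ 1 ≤ ν (x - r))
  /-- the residue field of `E` has `q²` elements -/
  residue_E : ∃ R : Finset E, R.card = q ^ 2 ∧ (∀ r ∈ R, r = 0 ∨ 0 ≤ ν r) ∧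
    ∀ x : E, (x = 0 ∨ 0 ≤ ν x) →
      ∃! r, r ∈ R ∧ (x - r = 0 ∨ 1 ≤ ν (x - r))
  /-- Hensel: a unit of `O_E` that is a square modulo `p_E` is a square (residue char. odd) -/
  hensel_sq : ∀ u w : E, u ≠ 0 → ν u = 0 → w ≠ 0 → ν w = 0 →
    (w * w - u = 0 ∨ 1 ≤ ν (w * w - u)) → ∃ v : E, v * v = u

namespace Setting

variable {E : Type*} [Field E] (S : Setting E)

/-- `x` lies in the ring of integers `O_E`. -/
def inOE (x : E) : Prop := x = 0 ∨ 0 ≤ S.ν x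

/-- `x` lies in the (fractional, if `d ≤ 0`) ideal `p_E^d`. -/
def inpE (d : ℤ) (x : E) : Prop := x = 0 ∨ d ≤ S.ν x

/-- `x` is a unit of `O_E`. -/
def unitOE (x : E) : Prop := x ≠ 0 ∧ S.ν x = 0

/-- `x` lies in the subfield `F` (the fixed field of `σ`). -/
def inF (x : E) : Prop := S.σ x = x

/-- `x` is a unit of `O_F`. -/
def unitOF (x : E) : Prop := S.σ x = x ∧ x ≠ 0 ∧ S.ν x = 0

/-- `x` lies in `E¹`, i.e. has norm one. -/
def normOne (x : E) : Prop := x * S.σ x = 1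

/-- `x ∈ √ε·F`. -/
def inSqεF (x : E) : Prop := ∃ f : E, S.σ f = f ∧ x = S.sqε * f

/-- Entrywise application of `σ` to a matrix, `ḡ`. -/
def mbar (g : Matrix (Fin 2) (Fin 2) E) : Matrix (Fin 2) (Fin 2) E :=
  Matrix.of fun i j => S.σ (g i j)

/-- The antidiagonal matrix `w = [[0,1],[1,0]]` defining the hermitian form. -/
def wmat (_S : Setting E) : Matrix (Fin 2) (Fin 2) E := !![0, 1; 1, 0]

/-- Membership in `G = U(1,1)(F) = {g : ḡᵀ·w·g = w}`. -/
def inG (g : Matrix (Fin 2) (Fin 2) E) : Prop :=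
  (S.mbar g)ᵀ * S.wmat * g = S.wmat

/-- `G = U(1,1)(F)`, as a set of 2×2 matrices over `E`. -/
def Gset : Set (Matrix (Fin 2) (Fin 2) E) := {g | S.inG g}

/-- `G_der = SU(1,1)(F) = {g ∈ G : det g = 1}`. -/
def Gder : Set (Matrix (Fin 2) (Fin 2) E) := {g | S.inG g ∧ g.det = 1}

/-- The standard maximal compact subgroup `K` of `G` (entries in `O_E`). -/
def Kset : Set (Matrix (Fin 2) (Fin 2) E) := {g | S.inG g ∧ ∀ i j, S.inOE (g i j)}

/-- The congruence subgroup `K_d = {k ∈ K : k − 1 ∈ p_E^d·M₂(O_E)}`. -/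
def Kfil (d : ℤ) : Set (Matrix (Fin 2) (Fin 2) E) :=
  {g | g ∈ S.Kset ∧ ∀ i j, S.inpE d ((g - 1) i j)}

/-- The subgroup `B` of upper triangular matrices in `K`. -/
def Bset : Set (Matrix (Fin 2) (Fin 2) E) := {g | g ∈ S.Kset ∧ g 1 0 = 0}

/-- The subgroup `B^op` of lower triangular matrices in `K`. -/
def Bop : Set (Matrix (Fin 2) (Fin 2) E) := {g | g ∈ S.Kset ∧ g 0 1 = 0}

/-- The center `Z = {z·I : z ∈ E¹}` of `G`. -/
def Zset : Set (Matrix (Fin 2) (Fin 2) E) :=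
  {g | ∃ z : E, S.normOne z ∧ g = z • (1 : Matrix (Fin 2) (Fin 2) E)}

/-- The matrix `α^t = diag(ϖ^{−t}, ϖ^t)`. -/
def αmat (t : ℕ) : Matrix (Fin 2) (Fin 2) E := !![(S.ϖ ^ t)⁻¹, 0; 0, S.ϖ ^ t]

/-- The matrix `η = diag(1, ϖ)` (it normalizes `G`). -/
def ηmat : Matrix (Fin 2) (Fin 2) E := !![1, 0; 0, S.ϖ]

/-- The matrix `η⁻¹ = diag(1, ϖ⁻¹)`. -/
def ηinv : Matrix (Fin 2) (Fin 2) E := !![1, 0; 0, S.ϖ⁻¹]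

/-- The torus `T_{γ₁,γ₂} = {[[a,bγ₁],[bγ₂,a]] : a·ā + b·b̄·γ₁γ₂ = 1, ā·b ∈ √ε·F}`. -/
def Tset (γ₁ γ₂ : E) : Set (Matrix (Fin 2) (Fin 2) E) :=
  {g | ∃ a b : E, g = !![a, b * γ₁; b * γ₂, a] ∧
    a * S.σ a + b * S.σ b * (γ₁ * γ₂) = 1 ∧ S.inSqεF (S.σ a * b)}

/-- The Moy–Prasad filtration subgroup `G_{y,r}` of `G` (for `r > 0`). -/
def Gfil (y r : ℚ) : Set (Matrix (Fin 2) (Fin 2) E) :=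
  {g | S.inG g ∧ S.inpE ⌈r⌉ (g 0 0 - 1) ∧ S.inpE ⌈r⌉ (g 1 1 - 1) ∧
    S.inpE ⌈r - y⌉ (g 0 1) ∧ S.inpE ⌈r + y⌉ (g 1 0)}

/-- `G_{y,0+} = ⋃_{r>0} G_{y,r}`. -/
def Gfil0plus (y : ℚ) : Set (Matrix (Fin 2) (Fin 2) E) :=
  {g | ∃ r : ℚ, 0 < r ∧ g ∈ S.Gfil y r}

end Setting


section Aux18

variable {E : Type*} [Field E] (S : Setting E)

lemma Setting.aux_ν_one : S.ν 1 = 0 := by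
  have h := S.ν_mul (x := 1) (y := 1) one_ne_zero one_ne_zero
  rw [mul_one] at h; omega

lemma Setting.aux_ν_pow (n : ℕ) : S.ν (S.ϖ ^ n) = n := by
  induction n with
  | zero => simpa using S.aux_ν_one
  | succ m ih =>
    rw [pow_succ, S.ν_mul (pow_ne_zero _ S.ϖ_ne_zero) S.ϖ_ne_zero, ih, S.ν_ϖ]
    push_cast; ring

lemma Setting.aux_ν_inv {x : E} (hx : x ≠ 0) : S.ν x⁻¹ = -S.ν x := by
  have h := S.ν_mul hx (inv_ne_zero hx)
  rw [mul_inv_cancel₀ hx, S.aux_ν_one] at h; omega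

lemma Setting.aux_σ_pow (n : ℕ) : S.σ (S.ϖ ^ n) = S.ϖ ^ n := by
  rw [map_pow, S.ϖ_fixed]

lemma Setting.aux_σ_pow_inv (n : ℕ) : S.σ ((S.ϖ ^ n)⁻¹) = (S.ϖ ^ n)⁻¹ := by
  rw [map_inv₀, S.aux_σ_pow]

lemma Setting.aux_ηmat_pow (n : ℕ) : S.ηmat ^ n = !![1, 0; 0, S.ϖ ^ n] := by
  induction n with
  | zero => simp [Matrix.one_fin_two]
  | succ m ih =>
    rw [pow_succ, ih, Setting.ηmat, Matrix.mul_fin_two, pow_succ]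
    congr 1 <;> ring

lemma Setting.aux_ηinv_pow (n : ℕ) : S.ηinv ^ n = !![1, 0; 0, (S.ϖ ^ n)⁻¹] := by
  induction n with
  | zero => simp [Matrix.one_fin_two]
  | succ m ih =>
    rw [pow_succ, ih, Setting.ηinv, Matrix.mul_fin_two, pow_succ, mul_inv]
    congr 1 <;> ring

lemma Setting.aux_conj_eq (n : ℕ) (a : Matrix (Fin 2) (Fin 2) E) :
    S.ηinv ^ n * a * S.ηmat ^ n =
      !![a 0 0, a 0 1 * S.ϖ ^ n; a 1 0 * (S.ϖ ^ n)⁻¹, a 1 1] := by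
  have hp : S.ϖ ^ n ≠ 0 := pow_ne_zero _ S.ϖ_ne_zero
  rw [S.aux_ηmat_pow, S.aux_ηinv_pow, Matrix.eta_fin_two a, Matrix.mul_fin_two,
    Matrix.mul_fin_two]
  ext i j
  fin_cases i <;> fin_cases j <;> simp <;> field_simp

lemma Setting.aux_inG_iff (g : Matrix (Fin 2) (Fin 2) E) :
    S.inG g ↔ (S.σ (g 1 0) * g 0 0 + S.σ (g 0 0) * g 1 0 = 0 ∧
      S.σ (g 1 0) * g 0 1 + S.σ (g 0 0) * g 1 1 = 1 ∧
      S.σ (g 1 1) * g 0 0 + S.σ (g 0 1) * g 1 0 = 1 ∧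
      S.σ (g 1 1) * g 0 1 + S.σ (g 0 1) * g 1 1 = 0) := by
  unfold Setting.inG Setting.wmat Setting.mbar
  rw [← Matrix.ext_iff]
  simp only [Fin.forall_fin_two, Matrix.mul_apply, Fin.sum_univ_two,
    Matrix.transpose_apply, Matrix.of_apply, Matrix.cons_val', Matrix.cons_val_zero,
    Matrix.cons_val_one, Matrix.head_cons, Matrix.empty_val', Matrix.cons_val_fin_one,
    Matrix.head_fin_const]
  constructor
  · rintro ⟨⟨h1, h2⟩, h3, h4⟩
    refine ⟨by linear_combination h1, by linear_combination h2,
      by linear_combination h3, by linear_combination h4⟩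
  · rintro ⟨h1, h2, h3, h4⟩
    refine ⟨⟨by linear_combination h1, by linear_combination h2⟩,
      by linear_combination h3, by linear_combination h4⟩

lemma Setting.aux_inOE_of_inpE {x : E} {n : ℤ} (hn : 0 ≤ n) (h : S.inpE n x) :
    S.inOE x := by
  rcases h with h | h
  · exact Or.inl h
  · exact Or.inr (le_trans hn h)

lemma Setting.aux_inpE_mono {x : E} {m n : ℤ} (hmn : m ≤ n) (h : S.inpE n x) :
    S.inpE m x := by
  rcases h with h | h
  · exact Or.inl h
  · exact Or.inr (le_trans hmn h)

lemma Setting.aux_sqε_ne_zero : S.sqε ≠ 0 := by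
  intro h
  exact S.ε_ne_zero (by rw [← S.sqε_sq, h, mul_zero])

lemma Setting.aux_ν_sqε : S.ν S.sqε = 0 := by
  have h := S.ν_mul S.aux_sqε_ne_zero S.aux_sqε_ne_zero
  rw [S.sqε_sq, S.ν_ε] at h; omega

end Aux18

/-- Let `d > 0`, let `V` be a nonzero complex vector space and let `ρ` be
a representation of `K` on `V` (modelled as a function on matrices that is multiplicative
on `K` and sends `1` to `1`) with `K₁ ⊆ ker ρ`.  Define `ρ^{η^d}` on
`B·K_d = K ∩ η^dKη^{−d}` by `ρ^{η^d}(a) = ρ(η^{−d}·a·η^{d})`.  Then: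
(i) `K_{d+1} ⊆ ker(ρ^{η^d})`; and
(ii) if there is `c ∈ √ε·O_F^×` with `ρ([[1,0],[c,1]]) ≠ id`, then
`K_d ⊄ ker(ρ^{η^d})`. -/
theorem statement18 {E : Type*} [Field E] (S : Setting E) (d : ℕ) (hd : 0 < d)
    (V : Type*) [AddCommGroup V] [Module ℂ V] [Nontrivial V]
    (ρ : Matrix (Fin 2) (Fin 2) E → (V ≃ₗ[ℂ] V))
    (hρ_mul : ∀ a ∈ S.Kset, ∀ b ∈ S.Kset, ρ (a * b) = ρ a * ρ b)
    (hρ_one : ρ 1 = 1)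
    (hρ_ker : ∀ k ∈ S.Kfil 1, ρ k = 1) :
    -- (i) `K_{d+1} ⊆ ker (ρ^{η^d})`
    (∀ a ∈ S.Kfil (d + 1 : ℕ), ρ (S.ηinv ^ d * a * S.ηmat ^ d) = 1) ∧
    -- (ii) if `ρ([[1,0],[c,1]]) ≠ id` for some `c ∈ √ε·O_F^×`, then `K_d ⊄ ker (ρ^{η^d})`
    ((∃ c : E, (∃ f : E, S.σ f = f ∧ f ≠ 0 ∧ S.ν f = 0 ∧ c = S.sqε * f) ∧
        ρ !![1, 0; c, 1] ≠ 1) →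
      ∃ a ∈ S.Kfil d, ρ (S.ηinv ^ d * a * S.ηmat ^ d) ≠ 1) := by
  have hp : S.ϖ ^ d ≠ 0 := pow_ne_zero _ S.ϖ_ne_zero
  have hνp : S.ν (S.ϖ ^ d) = d := S.aux_ν_pow d
  constructor
  · intro a ha
    obtain ⟨⟨haG, haO⟩, haP⟩ := ha
    have h00 : S.inpE ((d : ℤ) + 1) (a 0 0 - 1) := by
      have := haP 0 0; simpa [Matrix.sub_apply, Matrix.one_apply] using this
    have h11 : S.inpE ((d : ℤ) + 1) (a 1 1 - 1) := by
      have := haP 1 1; simpa [Matrix.sub_apply, Matrix.one_apply] using this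
    have h01 : S.inpE ((d : ℤ) + 1) (a 0 1) := by
      have := haP 0 1; simpa [Matrix.sub_apply, Matrix.one_apply] using this
    have h10 : S.inpE ((d : ℤ) + 1) (a 1 0) := by
      have := haP 1 0; simpa [Matrix.sub_apply, Matrix.one_apply] using this
    have hb01 : S.inpE 1 (a 0 1 * S.ϖ ^ d) := by
      by_cases hne : a 0 1 = 0
      · exact Or.inl (by rw [hne, zero_mul])
      · rcases h01 with h | h
        · exact absurd h hne
        · exact Or.inr (by rw [S.ν_mul hne hp, hνp]; omega)
    have hb10 : S.inpE 1 (a 1 0 * (S.ϖ ^ d)⁻¹) := by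
      by_cases hne : a 1 0 = 0
      · exact Or.inl (by rw [hne, zero_mul])
      · rcases h10 with h | h
        · exact absurd h hne
        · exact Or.inr (by rw [S.ν_mul hne (inv_ne_zero hp), S.aux_ν_inv hp, hνp]; omega)
    rw [S.aux_conj_eq]
    apply hρ_ker
    obtain ⟨e1, e2, e3, e4⟩ := (S.aux_inG_iff a).mp haG
    refine ⟨⟨?_, ?_⟩, ?_⟩
    · rw [S.aux_inG_iff]
      simp only [Fin.isValue, Matrix.of_apply, Matrix.cons_val', Matrix.cons_val_zero,
        Matrix.cons_val_one, Matrix.head_cons, Matrix.empty_val', Matrix.cons_val_fin_one, Matrix.head_fin_const,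
        _root_.map_mul, S.aux_σ_pow, S.aux_σ_pow_inv]
      refine ⟨?_, ?_, ?_, ?_⟩
      · linear_combination (S.ϖ ^ d)⁻¹ * e1
      · field_simp; linear_combination e2
      · field_simp; linear_combination e3
      · linear_combination (S.ϖ ^ d) * e4
    · intro i j
      fin_cases i <;> fin_cases j <;> simp only [Fin.isValue, Fin.mk_zero, Fin.mk_one,
        Matrix.of_apply, Matrix.cons_val', Matrix.cons_val_zero, Matrix.cons_val_one,
        Matrix.head_cons, Matrix.empty_val', Matrix.cons_val_fin_one, Matrix.head_fin_const]
      · exact haO 0 0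
      · exact S.aux_inOE_of_inpE (by omega) hb01
      · exact S.aux_inOE_of_inpE (by omega) hb10
      · exact haO 1 1
    · intro i j
      fin_cases i <;> fin_cases j <;> simp [Matrix.sub_apply, Matrix.one_apply]
      · exact S.aux_inpE_mono (by omega) h00
      · exact hb01
      · exact hb10
      · exact S.aux_inpE_mono (by omega) h11
  · rintro ⟨c, ⟨f, hσf, hf0, hνf, hcf⟩, hρc⟩
    have hsq0 : S.sqε ≠ 0 := S.aux_sqε_ne_zero
    set x : E := S.sqε * f * S.ϖ ^ d with hx
    have hx0 : x ≠ 0 := mul_ne_zero (mul_ne_zero hsq0 hf0) hp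
    have hνx : S.ν x = d := by
      rw [hx, S.ν_mul (mul_ne_zero hsq0 hf0) hp, S.ν_mul hsq0 hf0, S.aux_ν_sqε, hνf, hνp]
      ring
    have hσx : S.σ x = -x := by
      rw [hx, _root_.map_mul, _root_.map_mul, S.sqε_conj, hσf, S.aux_σ_pow]; ring
    refine ⟨!![1, 0; x, 1], ⟨⟨?_, ?_⟩, ?_⟩, ?_⟩
    · rw [S.aux_inG_iff]
      simp only [Matrix.cons_val', Matrix.cons_val_zero, Matrix.cons_val_one,
        Matrix.head_cons, Matrix.empty_val', Matrix.cons_val_fin_one, Matrix.head_fin_const, Fin.isValue,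
        Matrix.of_apply, _root_.map_one, _root_.map_zero, hσx]
      refine ⟨by ring, by ring, by ring, by ring⟩
    · intro i j
      fin_cases i <;> fin_cases j <;> simp only [Fin.isValue, Fin.mk_zero, Fin.mk_one,
        Matrix.of_apply, Matrix.cons_val', Matrix.cons_val_zero, Matrix.cons_val_one,
        Matrix.head_cons, Matrix.empty_val', Matrix.cons_val_fin_one, Matrix.head_fin_const]
      · exact Or.inr (le_of_eq S.aux_ν_one.symm)
      · exact Or.inl rfl
      · exact Or.inr (by rw [hνx]; positivity)
      · exact Or.inr (le_of_eq S.aux_ν_one.symm)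
    · intro i j
      fin_cases i <;> fin_cases j <;> simp [Matrix.sub_apply, Matrix.one_apply]
      · exact Or.inl rfl
      · exact Or.inl rfl
      · exact Or.inr (le_of_eq hνx.symm)
      · exact Or.inl rfl
    · have hc : x * (S.ϖ ^ d)⁻¹ = c := by rw [hcf, hx]; field_simp
      rw [S.aux_conj_eq]
      simp only [Fin.isValue, Matrix.of_apply, Matrix.cons_val', Matrix.cons_val_zero,
        Matrix.cons_val_one, Matrix.head_cons, Matrix.empty_val', Matrix.cons_val_fin_one,
        Matrix.head_fin_const, zero_mul, hc]
      exact hρc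
end
end
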